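/- If g is an irreducible metric Lie algebra (over R), then g admits either zero or exactly two orthogonal bi-invariant complex structures; in the latter case the two structures are J and -J for a single J. -/

import Mathlib

open scoped RealInnerProductSpace TensorProduct

/-- A metric Lie algebra: a real Lie algebra equipped with a positive definite inner product. -/
class MetricLieAlgebra (g : Type*) [LieRing g] [LieAlgebra ℝ g] [Inner ℝ g] : Prop where
  inner_add_left : ∀ x y z : g, ⟪x + y, z⟫ = ⟪x, z⟫ + ⟪y, z⟫
  inner_smul_left : ∀ (r : ℝ) (x y : g), ⟪r • x, y⟫ = r * ⟪x, y⟫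
  inner_symm : ∀ x y : g, ⟪x, y⟫ = ⟪y, x⟫
  inner_self_pos : ∀ x : g, x ≠ 0 → 0 < ⟪x, x⟫

variable {g : Type*} [LieRing g] [LieAlgebra ℝ g] [Inner ℝ g]

/-- An orthogonal factor: an ideal admitting a complementary ideal orthogonal to it. -/
def IsOrthogonalFactor (h : LieIdeal ℝ g) : Prop :=
  ∃ h' : LieIdeal ℝ g, (∀ x ∈ h, ∀ y ∈ h', ⟪x, y⟫ = 0) ∧ h ⊔ h' = ⊤ ∧ h ⊓ h' = ⊥

/-- An orthogonal projection of a metric Lie algebra. -/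
def IsOrthogonalProjection (p : g →ₗ[ℝ] g) : Prop :=
  (∀ x y : g, p ⁅x, y⁆ = ⁅p x, p y⁆) ∧ p ∘ₗ p = p ∧
  (∀ x y : g, p ⁅x, y⁆ = ⁅p x, y⁆) ∧ ∀ x y : g, ⟪p x, y⟫ = ⟪x, p y⟫

/-- An orthogonal bi-invariant complex structure. -/
def IsOrthBiinvCplxStruct (J : g →ₗ[ℝ] g) : Prop :=
  (∀ x : g, J (J x) = -x) ∧ (∀ x y : g, J ⁅x, y⁆ = ⁅J x, y⁆) ∧
    ∀ x y : g, ⟪J x, J y⟫ = ⟪x, y⟫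

/-- A metric Lie algebra is irreducible if it is non-zero and its only orthogonal
factors are `⊥` and `⊤`. -/
def IsIrreducibleMLA (g : Type*) [LieRing g] [LieAlgebra ℝ g] [Inner ℝ g] : Prop :=
  (∃ x : g, x ≠ 0) ∧ ∀ h : LieIdeal ℝ g, IsOrthogonalFactor h → h = ⊥ ∨ h = ⊤

section Helpers

set_option linter.unusedSectionVars false

variable [MetricLieAlgebra g]

private lemma inn_zero_left (x : g) : ⟪(0 : g), x⟫ = 0 := by
  have h := MetricLieAlgebra.inner_smul_left (0 : ℝ) (0 : g) x
  simpa using h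

private lemma inn_zero_right (x : g) : ⟪x, (0 : g)⟫ = 0 := by
  rw [MetricLieAlgebra.inner_symm]; exact inn_zero_left x

private lemma inn_add_right (x y z : g) : ⟪x, y + z⟫ = ⟪x, y⟫ + ⟪x, z⟫ := by
  rw [MetricLieAlgebra.inner_symm x (y + z), MetricLieAlgebra.inner_add_left,
    MetricLieAlgebra.inner_symm y x, MetricLieAlgebra.inner_symm z x]

private lemma inn_smul_right (r : ℝ) (x y : g) : ⟪x, r • y⟫ = r * ⟪x, y⟫ := by
  rw [MetricLieAlgebra.inner_symm x (r • y), MetricLieAlgebra.inner_smul_left,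
    MetricLieAlgebra.inner_symm y x]

private lemma inn_neg_left (x y : g) : ⟪-x, y⟫ = -⟪x, y⟫ := by
  have h := MetricLieAlgebra.inner_smul_left (-1 : ℝ) x y
  simpa using h

private lemma inn_neg_right (x y : g) : ⟪x, -y⟫ = -⟪x, y⟫ := by
  rw [MetricLieAlgebra.inner_symm, inn_neg_left, MetricLieAlgebra.inner_symm]

private lemma inn_sub_left (x y z : g) : ⟪x - y, z⟫ = ⟪x, z⟫ - ⟪y, z⟫ := by
  rw [sub_eq_add_neg, MetricLieAlgebra.inner_add_left, inn_neg_left, sub_eq_add_neg]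

private lemma inn_sub_right (x y z : g) : ⟪x, y - z⟫ = ⟪x, y⟫ - ⟪x, z⟫ := by
  rw [sub_eq_add_neg, inn_add_right, inn_neg_right, sub_eq_add_neg]

private lemma eq_zero_of_inn_self {x : g} (h : ⟪x, x⟫ = 0) : x = 0 := by
  by_contra hx
  exact absurd h (ne_of_gt (MetricLieAlgebra.inner_self_pos x hx))

/-- Build a Lie ideal from a submodule closed under brackets. -/
private def mkIdeal (p : Submodule ℝ g) (hp : ∀ (x m : g), m ∈ p → ⁅x, m⁆ ∈ p) :
    LieIdeal ℝ g :=
  { p with lie_mem := fun {x m} hm => hp x m hm }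

private lemma mem_mkIdeal {p : Submodule ℝ g} {hp : ∀ (x m : g), m ∈ p → ⁅x, m⁆ ∈ p}
    {x : g} : x ∈ mkIdeal p hp ↔ x ∈ p := Iff.rfl

private lemma coe_mkIdeal (p : Submodule ℝ g) (hp : ∀ (x m : g), m ∈ p → ⁅x, m⁆ ∈ p) :
    ((mkIdeal p hp : LieIdeal ℝ g) : Submodule ℝ g) = p := rfl

/-- Skew-adjointness of an orthogonal bi-invariant complex structure. -/
private lemma skew_of_struct {J : g →ₗ[ℝ] g} (hJ : IsOrthBiinvCplxStruct J) (x y : g) :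
    ⟪J x, y⟫ = -⟪x, J y⟫ := by
  have h1 : ⟪J x, J (J y)⟫ = ⟪x, J y⟫ := hJ.2.2 x (J y)
  rw [hJ.1 y, inn_neg_right] at h1
  linarith

/-- Bi-invariance in the right slot. -/
private lemma lie_right_of_struct {J : g →ₗ[ℝ] g} (hJ : IsOrthBiinvCplxStruct J)
    (x y : g) : ⁅x, J y⁆ = J ⁅x, y⁆ := by
  rw [← lie_skew x (J y), ← hJ.2.1, ← map_neg, lie_skew]

/-- If `f` intertwines the bracket (in the left slot) and its kernel is orthogonal to
its range, then by irreducibility the kernel is `⊥` or `⊤`. -/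
private lemma ker_bot_or_top [Module.Finite ℝ g] (f : g →ₗ[ℝ] g)
    (hf : ∀ x y : g, f ⁅x, y⁆ = ⁅f x, y⁆)
    (horth : ∀ x : g, f x = 0 → ∀ u : g, ⟪x, f u⟫ = 0)
    (hirr : ∀ h : LieIdeal ℝ g, IsOrthogonalFactor h → h = ⊥ ∨ h = ⊤) :
    LinearMap.ker f = ⊥ ∨ LinearMap.ker f = ⊤ := by
  have hfr : ∀ x y : g, f ⁅x, y⁆ = ⁅x, f y⁆ := by
    intro x y
    rw [← lie_skew x y, map_neg, hf, lie_skew]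
  set p := LinearMap.ker f with hpdef
  set q := LinearMap.range f with hqdef
  have hpl : ∀ (x m : g), m ∈ p → ⁅x, m⁆ ∈ p := by
    intro x m hm
    have hm' : f m = 0 := hm
    have : f ⁅x, m⁆ = 0 := by rw [hfr, hm', lie_zero]
    exact this
  have hql : ∀ (x m : g), m ∈ q → ⁅x, m⁆ ∈ q := by
    intro x m hm
    obtain ⟨u, rfl⟩ := hm
    exact ⟨⁅x, u⁆, hfr x u⟩
  have hinf : p ⊓ q = ⊥ := by
    rw [eq_bot_iff]
    intro z hz
    obtain ⟨hz1, hz2⟩ := Submodule.mem_inf.mp hz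
    obtain ⟨u, rfl⟩ := hz2
    have h0 : f (f u) = 0 := hz1
    have := horth (f u) h0 u
    rw [Submodule.mem_bot]
    exact eq_zero_of_inn_self this
  have hsup : p ⊔ q = ⊤ := by
    have h1 := Submodule.finrank_sup_add_finrank_inf_eq p q
    rw [hinf, finrank_bot, add_zero] at h1
    have h2 := LinearMap.finrank_range_add_finrank_ker f
    rw [← hpdef, ← hqdef] at h2
    exact Submodule.eq_top_of_finrank_eq (by omega)
  have hfac : IsOrthogonalFactor (mkIdeal p hpl) := by
    refine ⟨mkIdeal q hql, ?_, ?_, ?_⟩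
    · rintro x hx y ⟨u, rfl⟩
      exact horth x hx u
    · rw [← LieSubmodule.toSubmodule_inj]
      simp; exact hsup
    · rw [← LieSubmodule.toSubmodule_inj]
      simp; exact hinf
  rcases hirr _ hfac with h | h
  · left
    rw [eq_bot_iff]
    intro x hx
    have hx' : x ∈ mkIdeal p hpl := hx
    rw [h] at hx'
    exact (Submodule.mem_bot ℝ).mpr ((LieSubmodule.mem_bot _).mp hx')
  · right
    rw [eq_top_iff]
    intro x _
    have hx' : x ∈ mkIdeal p hpl := by rw [h]; exact LieSubmodule.mem_top x
    exact hx'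

/-- An irreducible metric Lie algebra carrying a complex structure is non-abelian. -/
private lemma nonabelian (hg : IsIrreducibleMLA g) {J : g →ₗ[ℝ] g}
    (hJ : IsOrthBiinvCplxStruct J) : ∃ a b : g, ⁅a, b⁆ ≠ 0 := by
  by_contra hab
  push_neg at hab
  obtain ⟨⟨x0, hx0⟩, hirr⟩ := hg
  have hx0x0 : ⟪x0, x0⟫ ≠ 0 := ne_of_gt (MetricLieAlgebra.inner_self_pos x0 hx0)
  set p := Submodule.span ℝ ({x0} : Set g) with hpdef
  have hpl : ∀ (x m : g), m ∈ p → ⁅x, m⁆ ∈ p := fun x m _ => by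
    rw [hab]; exact p.zero_mem
  set φ : g →ₗ[ℝ] ℝ :=
    { toFun := fun y => ⟪x0, y⟫
      map_add' := inn_add_right x0
      map_smul' := fun r y => by simpa using inn_smul_right r x0 y } with hφdef
  have hφ : ∀ y : g, φ y = ⟪x0, y⟫ := fun y => rfl
  set q := LinearMap.ker φ with hqdef
  have hql : ∀ (x m : g), m ∈ q → ⁅x, m⁆ ∈ q := fun x m _ => by
    have : φ ⁅x, m⁆ = 0 := by rw [hab, map_zero]
    exact this
  have horth : ∀ x ∈ mkIdeal p hpl, ∀ y ∈ mkIdeal q hql, ⟪x, y⟫ = 0 := by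
    intro x hx y hy
    obtain ⟨c, rfl⟩ := Submodule.mem_span_singleton.mp hx
    have hy' : ⟪x0, y⟫ = 0 := hy
    rw [MetricLieAlgebra.inner_smul_left, hy', mul_zero]
  have hsup : p ⊔ q = ⊤ := by
    rw [eq_top_iff]
    intro y _
    refine Submodule.mem_sup.mpr ⟨(⟪x0, y⟫ / ⟪x0, x0⟫) • x0,
      Submodule.smul_mem _ _ (Submodule.mem_span_singleton_self x0),
      y - (⟪x0, y⟫ / ⟪x0, x0⟫) • x0, ?_, by abel⟩
    have : φ (y - (⟪x0, y⟫ / ⟪x0, x0⟫) • x0) = 0 := by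
      rw [map_sub, map_smul, hφ, hφ, smul_eq_mul, div_mul_cancel₀ _ hx0x0, sub_self]
    exact this
  have hinf : p ⊓ q = ⊥ := by
    rw [eq_bot_iff]
    intro z hz
    obtain ⟨hz1, hz2⟩ := Submodule.mem_inf.mp hz
    obtain ⟨c, rfl⟩ := Submodule.mem_span_singleton.mp hz1
    have h1 : φ (c • x0) = 0 := hz2
    rw [map_smul, hφ, smul_eq_mul] at h1
    rcases mul_eq_zero.mp h1 with h | h
    · rw [Submodule.mem_bot, h, zero_smul]
    · exact absurd h hx0x0
  have hfac : IsOrthogonalFactor (mkIdeal p hpl) := by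
    refine ⟨mkIdeal q hql, horth, ?_, ?_⟩
    · rw [← LieSubmodule.toSubmodule_inj]
      simp; exact hsup
    · rw [← LieSubmodule.toSubmodule_inj]
      simp; exact hinf
  rcases hirr _ hfac with h | h
  · have : x0 ∈ mkIdeal p hpl := Submodule.mem_span_singleton_self x0
    rw [h] at this
    exact hx0 ((LieSubmodule.mem_bot _).mp this)
  · have hmem : J x0 ∈ mkIdeal p hpl := by rw [h]; exact LieSubmodule.mem_top _
    obtain ⟨c, hc⟩ := Submodule.mem_span_singleton.mp hmem
    have h2 : J (J x0) = (c * c) • x0 := by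
      rw [← hc, map_smul, ← hc, smul_smul]
    rw [hJ.1] at h2
    have h3 : (c * c + 1) • x0 = 0 := by
      rw [add_smul, one_smul, ← h2]
      abel
    have hc2 : c * c + 1 ≠ 0 := by nlinarith [mul_self_nonneg c]
    rcases smul_eq_zero.mp h3 with h | h
    · exact hc2 h
    · exact hx0 h

end Helpers

/-- An irreducible metric Lie algebra has either zero or exactly two orthogonal
bi-invariant complex structures; in the latter case they are `J` and `-J`. -/
theorem stmt14 (g : Type*) [LieRing g] [LieAlgebra ℝ g] [Inner ℝ g]
    [MetricLieAlgebra g] [Module.Finite ℝ g] (hg : IsIrreducibleMLA g) :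
    {J : g →ₗ[ℝ] g | IsOrthBiinvCplxStruct J} = ∅ ∨
    ∃ J : g →ₗ[ℝ] g, IsOrthBiinvCplxStruct J ∧
      {J' : g →ₗ[ℝ] g | IsOrthBiinvCplxStruct J'} = {J, -J} ∧ J ≠ -J := by
  rcases Set.eq_empty_or_nonempty {J : g →ₗ[ℝ] g | IsOrthBiinvCplxStruct J} with he | ⟨J, hJ⟩
  · exact Or.inl he
  right
  obtain ⟨a, b, hab⟩ := nonabelian hg hJ
  obtain ⟨⟨x0, hx0⟩, hirr⟩ := hg
  have key : ∀ J' : g →ₗ[ℝ] g, IsOrthBiinvCplxStruct J' → J' = J ∨ J' = -J := by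
    intro J' hJ'
    -- Step 1: J and J' commute.
    set C : g →ₗ[ℝ] g := J ∘ₗ J' - J' ∘ₗ J with hCdef
    have hCapp : ∀ x : g, C x = J (J' x) - J' (J x) := fun x => rfl
    have hCbr : ∀ x y : g, C ⁅x, y⁆ = ⁅C x, y⁆ := by
      intro x y
      simp only [hCapp, sub_lie, hJ.2.1, hJ'.2.1]
    have hCzero : ∀ x y : g, C ⁅x, y⁆ = 0 := by
      intro x y
      have e1 : J (J' ⁅x, y⁆) = ⁅J' x, J y⁆ := by
        rw [hJ'.2.1, ← lie_right_of_struct hJ]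
      have e2 : J' (J ⁅x, y⁆) = ⁅J' x, J y⁆ := by
        rw [← lie_right_of_struct hJ x y, hJ'.2.1]
      rw [hCapp, e1, e2, sub_self]
    have hCskew : ∀ u v : g, ⟪u, C v⟫ = -⟪C u, v⟫ := by
      intro u v
      have e1 : ⟪J (J' u), v⟫ = ⟪u, J' (J v)⟫ := by
        rw [skew_of_struct hJ, skew_of_struct hJ', neg_neg]
      have e2 : ⟪J' (J u), v⟫ = ⟪u, J (J' v)⟫ := by
        rw [skew_of_struct hJ', skew_of_struct hJ, neg_neg]
      rw [hCapp, hCapp, inn_sub_left, inn_sub_right, e1, e2]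
      ring
    have horthC : ∀ x : g, C x = 0 → ∀ u : g, ⟪x, C u⟫ = 0 := by
      intro x hx u
      rw [hCskew, hx, inn_zero_left, neg_zero]
    rcases ker_bot_or_top C hCbr horthC hirr with hk | hk
    · exfalso
      have : ⁅a, b⁆ ∈ LinearMap.ker C := hCzero a b
      rw [hk, Submodule.mem_bot] at this
      exact hab this
    have hcomm : ∀ x : g, J (J' x) = J' (J x) := by
      intro x
      have hx : C x = 0 := by
        have : x ∈ LinearMap.ker C := by rw [hk]; trivial
        exact this
      rw [hCapp] at hx
      exact sub_eq_zero.mp hx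
    -- Step 2: the symmetric idempotent-like operator Q = id − J∘J'.
    set Q : g →ₗ[ℝ] g := LinearMap.id - J ∘ₗ J' with hQdef
    have hQapp : ∀ x : g, Q x = x - J (J' x) := fun x => rfl
    have hQbr : ∀ x y : g, Q ⁅x, y⁆ = ⁅Q x, y⁆ := by
      intro x y
      simp only [hQapp, sub_lie, hJ.2.1, hJ'.2.1]
    have hQsym : ∀ u v : g, ⟪Q u, v⟫ = ⟪u, Q v⟫ := by
      intro u v
      have e1 : ⟪J (J' u), v⟫ = ⟪u, J (J' v)⟫ := by
        rw [skew_of_struct hJ, skew_of_struct hJ', neg_neg, ← hcomm]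
      rw [hQapp, hQapp, inn_sub_left, inn_sub_right, e1]
    have horthQ : ∀ x : g, Q x = 0 → ∀ u : g, ⟪x, Q u⟫ = 0 := by
      intro x hx u
      rw [MetricLieAlgebra.inner_symm, hQsym, hx, inn_zero_right]
    have hQQ : ∀ x : g, Q (Q x) = Q x + Q x := by
      intro x
      have e1 : J' (J (J' x)) = -(J x) := by
        rw [← hcomm, hJ'.1, map_neg]
      have e2 : J (J' (J (J' x))) = x := by
        rw [e1, map_neg, hJ.1, neg_neg]
      simp only [hQapp, map_sub, e2]
      abel
    rcases ker_bot_or_top Q hQbr horthQ hirr with hk2 | hk2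
    · -- Q injective ⇒ Q = 2·id ⇒ J' = J
      left
      have hQ2 : ∀ x : g, Q x = x + x := by
        intro x
        have hz : Q (Q x - (x + x)) = 0 := by
          rw [map_sub, hQQ, map_add, sub_self]
        have hmem : Q x - (x + x) ∈ LinearMap.ker Q := hz
        rw [hk2, Submodule.mem_bot] at hmem
        exact sub_eq_zero.mp hmem
      ext x
      have h := hQ2 x
      rw [hQapp] at h
      have h3 : J (J' x) = -x := by
        conv_lhs => rw [← sub_sub_cancel x (J (J' x)), h]
        abel
      have h4 := congrArg J h3
      rw [hJ.1 (J' x), map_neg] at h4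
      exact neg_injective h4
    · -- Q = 0 ⇒ J∘J' = id ⇒ J' = −J
      right
      ext x
      have h0 : Q x = 0 := by
        have : x ∈ LinearMap.ker Q := by rw [hk2]; trivial
        exact this
      rw [hQapp] at h0
      have h3 : J (J' x) = x := (sub_eq_zero.mp h0).symm
      have h4 := congrArg J h3
      rw [hJ.1 (J' x)] at h4
      have h5 : J' x = -(J x) := neg_eq_iff_eq_neg.mp h4
      simpa using h5
  refine ⟨J, hJ, ?_, ?_⟩
  · ext J'
    simp only [Set.mem_setOf_eq, Set.mem_insert_iff, Set.mem_singleton_iff]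
    constructor
    · intro h
      exact key J' h
    · rintro (rfl | rfl)
      · exact hJ
      · refine ⟨fun x => ?_, fun x y => ?_, fun x y => ?_⟩
        · simp [hJ.1 x]
        · simp [hJ.2.1 x y]
        · rw [LinearMap.neg_apply, LinearMap.neg_apply, inn_neg_left, inn_neg_right, neg_neg]
          exact hJ.2.2 x y
  · intro heq
    have h1 : J x0 + J x0 = 0 := by
      nth_rewrite 2 [heq]
      simp
    have h2 : J x0 = 0 := by
      have h3 : (2 : ℝ) • J x0 = 0 := by rw [two_smul]; exact h1
      rcases smul_eq_zero.mp h3 with h | h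
      · exact absurd h two_ne_zero
      · exact h
    have h4 : -x0 = 0 := by rw [← hJ.1 x0, h2, map_zero]
    exact hx0 (neg_eq_zero.mp h4)
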